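/- If G is a finite abelian group of odd order and H is a subgroup, then there exists a frame starter in G \ H, namely the patterned one consisting of the pairs {x, -x} for x ∈ G \ H. -/

import Mathlib

open scoped Classical

variable {G : Type*} [AddCommGroup G]

/-- The multiset of all elements appearing in the pairs of `S`. -/
def starterElems (S : Finset (G × G)) : Multiset G :=
  S.val.bind fun p => {p.1, p.2}

/-- The multiset of all differences `±(x - y)` arising from the pairs of `S`. -/
def starterDiffs (S : Finset (G × G)) : Multiset G :=
  S.val.bind fun p => {p.1 - p.2, p.2 - p.1}

/-- `S` is a frame starter in `G \ H`: its pairs partition `G \ H` and its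
differences `±(x - y)` enumerate each element of `G \ H` exactly once. -/
def IsFrameStarter (H : AddSubgroup G) (S : Finset (G × G)) : Prop :=
  (∀ z : G, (starterElems S).count z = if z ∈ H then 0 else 1) ∧
  (∀ z : G, (starterDiffs S).count z = if z ∈ H then 0 else 1)

/-- A frame starter is strong if the pair sums are pairwise distinct and avoid `H`. -/
def IsStrongFrameStarter (H : AddSubgroup G) (S : Finset (G × G)) : Prop :=
  IsFrameStarter H S ∧
  (∀ p ∈ S, p.1 + p.2 ∉ H) ∧
  (∀ p ∈ S, ∀ q ∈ S, p.1 + p.2 = q.1 + q.2 → p = q)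

theorem stmt_6 [Fintype G] (H : AddSubgroup G)
    (hodd : Odd (Nat.card G)) :
    ∃ S : Finset (G × G), (∀ p ∈ S, p.2 = -p.1) ∧ IsFrameStarter H S := by
  classical
  -- In a group of odd order, 2-torsion is trivial.
  have hzero : ∀ y : G, y + y = 0 → y = 0 := by
    intro y h
    have h1 : addOrderOf y ∣ 2 := addOrderOf_dvd_of_nsmul_eq_zero (by simpa [two_nsmul] using h)
    have h2 : addOrderOf y ∣ Nat.card G := addOrderOf_dvd_natCard y
    rcases (Nat.dvd_prime Nat.prime_two).mp h1 with h | h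
    · exact AddMonoid.addOrderOf_eq_one_iff.mp h
    · exfalso
      rw [h] at h2
      exact (Nat.not_even_iff_odd.mpr hodd) (even_iff_two_dvd.mpr h2)
  -- Doubling is bijective.
  have hinj : Function.Injective (fun x : G => x + x) := by
    intro a b hab
    have h0 : (a - b) + (a - b) = 0 := by
      simp only at hab
      rw [sub_add_sub_comm, hab, sub_self]
    exact sub_eq_zero.mp (hzero _ h0)
  have hbij : Function.Bijective (fun x : G => x + x) :=
    Finite.injective_iff_bijective.mp hinj
  set e2 : G ≃ G := Equiv.ofBijective _ hbij with he2
  have hd : ∀ z : G, e2.symm z + e2.symm z = z := fun z => e2.apply_symm_apply z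
  -- Halving preserves H.
  have hHhalf : ∀ x : G, x + x ∈ H → x ∈ H := by
    intro x hx
    have hinjH : Function.Injective (fun h : H => h + h) := by
      intro a b hab
      exact Subtype.ext (hinj (by simpa using congrArg Subtype.val hab))
    obtain ⟨h, hh⟩ := (Finite.injective_iff_surjective.mp hinjH) ⟨x + x, hx⟩
    have h1 : (h : G) + h = x + x := congrArg Subtype.val hh
    have h2 : (h : G) = x := hinj h1
    rw [← h2]; exact h.2
  have hne : ∀ x : G, x ∉ H → x ≠ -x := by
    intro x hx h
    apply hx
    have h0 : x + x = 0 := add_eq_zero_iff_eq_neg.mpr h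
    rw [hzero x h0]; exact H.zero_mem
  set e : G ≃ Fin (Fintype.card G) := Fintype.equivFin G with he
  set T : Finset G := Finset.univ.filter (fun x => x ∉ H ∧ e x < e (-x)) with hT
  have hmemT : ∀ x : G, x ∈ T ↔ x ∉ H ∧ e x < e (-x) := by
    intro x; simp [hT]
  refine ⟨T.map ⟨fun x => (x, -x), show Function.Injective (fun x : G => (x, -x)) from by intro a b h; exact (Prod.mk.injEq _ _ _ _ ▸ h).1⟩, ?_, ?_, ?_⟩
  · intro p hp
    simp only [Finset.mem_map, Function.Embedding.coeFn_mk] at hp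
    obtain ⟨x, _, rfl⟩ := hp
    rfl
  -- the elements
  · intro z
    unfold starterElems
    rw [Finset.map_val, Multiset.bind_map, Multiset.count_bind]
    simp only [Function.Embedding.coeFn_mk]
    have hcount : ∀ x : G, Multiset.count z ({x, -x} : Multiset G)
        = ((if z = -x then 1 else 0) + (if z = x then 1 else 0)) := by
      intro x
      simp [Multiset.count_cons, Multiset.count_singleton]
    simp only [hcount]
    rw [← Finset.sum_eq_multiset_sum]
    by_cases hz : z ∈ H
    · rw [if_pos hz]
      apply Finset.sum_eq_zero
      intro x hx
      obtain ⟨hxH, _⟩ := (hmemT x).mp hx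
      have h1 : ¬ (z = x) := fun h => hxH (h ▸ hz)
      have h2 : ¬ (z = -x) := by
        intro h
        exact hxH (by rw [show x = -z from by rw [h, neg_neg]]; exact H.neg_mem hz)
      rw [if_neg h2, if_neg h1]; rfl
    · rw [if_neg hz]
      have hzz : z ≠ -z := hne z hz
      have hezz : e z ≠ e (-z) := fun h => hzz (e.injective h)
      set x₀ : G := if e z < e (-z) then z else -z with hx₀
      rw [Finset.sum_eq_single x₀]
      · by_cases hc : e z < e (-z)
        · rw [hx₀, if_pos hc, if_neg hzz, if_pos rfl]
        · rw [hx₀, if_neg hc, neg_neg, if_pos rfl, if_neg hzz]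
      · intro b hb hbx
        obtain ⟨hbH, hblt⟩ := (hmemT b).mp hb
        have h1 : ¬ (z = b) := by
          intro h
          have h' : b = z := h.symm
          subst h'
          exact hbx (by rw [hx₀, if_pos hblt])
        have h2 : ¬ (z = -b) := by
          intro h
          have hb' : b = -z := by rw [h, neg_neg]
          subst hb'
          rw [neg_neg] at hblt
          exact hbx (by rw [hx₀, if_neg (lt_asymm hblt)])
        rw [if_neg h2, if_neg h1]; rfl
      · intro hx₀T
        exfalso
        apply hx₀T
        by_cases hc : e z < e (-z)
        · rw [hx₀, if_pos hc]
          exact (hmemT z).mpr ⟨hz, hc⟩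
        · rw [hx₀, if_neg hc]
          refine (hmemT (-z)).mpr ⟨fun h => hz (by rw [← neg_neg z]; exact H.neg_mem h), ?_⟩
          rw [neg_neg]
          exact lt_of_le_of_ne (not_lt.mp hc) (Ne.symm hezz)
  -- the differences
  · intro z
    unfold starterDiffs
    rw [Finset.map_val, Multiset.bind_map, Multiset.count_bind]
    simp only [Function.Embedding.coeFn_mk]
    have hcount : ∀ x : G, Multiset.count z ({x - -x, -x - x} : Multiset G)
        = ((if z = -x + -x then 1 else 0) + (if z = x + x then 1 else 0)) := by
      intro x
      have e1 : x - -x = x + x := sub_neg_eq_add x x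
      have e2 : -x - x = -x + -x := sub_eq_add_neg (-x) x
      rw [e1, e2]
      simp [Multiset.count_cons, Multiset.count_singleton]
    simp only [hcount]
    rw [← Finset.sum_eq_multiset_sum]
    set w : G := e2.symm z with hw
    have hww : w + w = z := hd z
    have hdm : ∀ x : G, z = x + x ↔ x = w := by
      intro x
      constructor
      · intro h
        exact hinj (show x + x = w + w by rw [hww]; exact h.symm)
      · intro h; subst h; exact hww.symm
    have hdm' : ∀ x : G, z = -x + -x ↔ x = -w := by
      intro x
      constructor
      · intro h
        have hxx : x + x = -z := by rw [h]; abel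
        have hww' : -w + -w = -z := by rw [← hww]; abel
        have := hinj (show x + x = -w + -w from hxx.trans hww'.symm)
        exact this
      · intro h; subst h; rw [neg_neg, hww]
    by_cases hz : z ∈ H
    · rw [if_pos hz]
      apply Finset.sum_eq_zero
      intro x hx
      obtain ⟨hxH, _⟩ := (hmemT x).mp hx
      have h1 : ¬ (z = x + x) := fun h => hxH (hHhalf x (h ▸ hz))
      have h2 : ¬ (z = -x + -x) := by
        intro h
        have hh : (-x) + (-x) ∈ H := by rw [← h]; exact hz
        have : -x ∈ H := hHhalf (-x) hh
        exact hxH (by rw [← neg_neg x]; exact H.neg_mem this)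
      rw [if_neg h2, if_neg h1]; rfl
    · rw [if_neg hz]
      have hwH : w ∉ H := fun h => hz (hww ▸ H.add_mem h h)
      have hwnz : w ≠ -w := hne w hwH
      have heww : e w ≠ e (-w) := fun h => hwnz (e.injective h)
      set x₀ : G := if e w < e (-w) then w else -w with hx₀
      rw [Finset.sum_eq_single x₀]
      · by_cases hc : e w < e (-w)
        · rw [hx₀, if_pos hc, if_neg (fun h => hwnz ((hdm' w).mp h)),
            if_pos ((hdm w).mpr rfl)]
        · rw [hx₀, if_neg hc, neg_neg, if_pos ((hdm w).mpr rfl),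
            if_neg (fun h => hwnz ((hdm' w).mp h))]
      · intro b hb hbx
        obtain ⟨hbH, hblt⟩ := (hmemT b).mp hb
        have h1 : ¬ (z = b + b) := by
          intro h
          have hb' : b = w := (hdm b).mp h
          subst hb'
          exact hbx (by rw [hx₀, if_pos hblt])
        have h2 : ¬ (z = -b + -b) := by
          intro h
          have hb' : b = -w := (hdm' b).mp h
          subst hb'
          rw [neg_neg] at hblt
          exact hbx (by rw [hx₀, if_neg (lt_asymm hblt)])
        rw [if_neg h2, if_neg h1]; rfl
      · intro hx₀T
        exfalso
        apply hx₀T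
        by_cases hc : e w < e (-w)
        · rw [hx₀, if_pos hc]
          exact (hmemT w).mpr ⟨hwH, hc⟩
        · rw [hx₀, if_neg hc]
          refine (hmemT (-w)).mpr ⟨fun h => hwH (by rw [← neg_neg w]; exact H.neg_mem h), ?_⟩
          rw [neg_neg]
          exact lt_of_le_of_ne (not_lt.mp hc) (Ne.symm heww)
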